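/- A T0, regular topological space admitting a σ-discrete basis is metrizable. -/

import Mathlib

open Set Filter Topology TopologicalSpace
open scoped UniformConvergence Uniformity

/-- A family of subsets of a topological space is discrete if every point has a
neighbourhood meeting at most one member of the family. -/
def IsDiscreteFamily {X : Type*} [TopologicalSpace X] (B : Set (Set X)) : Prop :=
  ∀ x : X, ∃ N ∈ nhds x, {s ∈ B | (s ∩ N).Nonempty}.Subsingleton

section Helpers
variable {X : Type*} [TopologicalSpace X]

/-- The closure of the union of a subfamily of a discrete family is contained in
the union of the closures. -/
theorem IsDiscreteFamily.closure_sUnion_subset {F G : Set (Set X)}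
    (hF : IsDiscreteFamily F) (hGF : G ⊆ F) :
    closure (⋃₀ G) ⊆ ⋃ s ∈ G, closure s := by
  intro x hx
  obtain ⟨N, hN, hsub⟩ := hF x
  obtain ⟨z, hzN, hzU⟩ := mem_closure_iff_nhds.mp hx N hN
  obtain ⟨s₀, hs₀G, hzs₀⟩ := hzU
  refine mem_iUnion₂.2 ⟨s₀, hs₀G, mem_closure_iff_nhds.2 fun t ht => ?_⟩
  obtain ⟨w, hwtN, hwU⟩ := mem_closure_iff_nhds.mp hx (t ∩ N) (inter_mem ht hN)
  obtain ⟨s₁, hs₁G, hws₁⟩ := hwU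
  have : s₁ = s₀ :=
    hsub ⟨hGF hs₁G, ⟨w, hws₁, hwtN.2⟩⟩ ⟨hGF hs₀G, ⟨z, hzs₀, hzN⟩⟩
  exact ⟨w, hwtN.1, this ▸ hws₁⟩

variable [RegularSpace X] {B : ℕ → Set (Set X)}

theorem exists_basic_closure_subset (hb : IsTopologicalBasis (⋃ n, B n))
    {U : Set X} (hU : IsOpen U) {x : X} (hx : x ∈ U) :
    ∃ m, ∃ s ∈ B m, x ∈ s ∧ closure s ⊆ U := by
  obtain ⟨C, ⟨hCn, hCc⟩, hCU⟩ := (closed_nhds_basis x).mem_iff.mp (hU.mem_nhds hx)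
  obtain ⟨s, hs, hxs, hsC⟩ :=
    hb.exists_subset_of_mem_open (mem_interior_iff_mem_nhds.2 hCn) isOpen_interior
  obtain ⟨m, hm⟩ := mem_iUnion.mp hs
  exact ⟨m, s, hm, hxs, (closure_minimal (hsC.trans interior_subset) hCc).trans hCU⟩

theorem normal_of_sigma_discrete_basis (hd : ∀ n, IsDiscreteFamily (B n))
    (hb : IsTopologicalBasis (⋃ n, B n)) : NormalSpace X := by
  have hbo : ∀ n, ∀ s ∈ B n, IsOpen s := fun n s hs => hb.isOpen (mem_iUnion.2 ⟨n, hs⟩)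
  constructor
  intro E F hE hF hEF
  let U : ℕ → Set X := fun n => ⋃₀ {s ∈ B n | closure s ⊆ Fᶜ}
  let V : ℕ → Set X := fun n => ⋃₀ {s ∈ B n | closure s ⊆ Eᶜ}
  have hUo : ∀ n, IsOpen (U n) := fun n => isOpen_sUnion fun s hs => hbo n s hs.1
  have hVo : ∀ n, IsOpen (V n) := fun n => isOpen_sUnion fun s hs => hbo n s hs.1
  have hUcl : ∀ n, closure (U n) ⊆ Fᶜ := fun n =>
    ((hd n).closure_sUnion_subset (fun s hs => hs.1)).trans
      (iUnion₂_subset fun s hs => hs.2)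
  have hVcl : ∀ n, closure (V n) ⊆ Eᶜ := fun n =>
    ((hd n).closure_sUnion_subset (fun s hs => hs.1)).trans
      (iUnion₂_subset fun s hs => hs.2)
  have hEU : ∀ x ∈ E, ∃ n, x ∈ U n := by
    intro x hx
    obtain ⟨m, s, hs, hxs, hcl⟩ := exists_basic_closure_subset hb hF.isOpen_compl
      (disjoint_left.mp hEF hx)
    exact ⟨m, s, ⟨hs, hcl⟩, hxs⟩
  have hFV : ∀ x ∈ F, ∃ n, x ∈ V n := by
    intro x hx
    obtain ⟨m, s, hs, hxs, hcl⟩ := exists_basic_closure_subset hb hE.isOpen_compl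
      (disjoint_right.mp hEF hx)
    exact ⟨m, s, ⟨hs, hcl⟩, hxs⟩
  let U' : ℕ → Set X := fun n => U n \ ⋃ k ∈ Iic n, closure (V k)
  let V' : ℕ → Set X := fun n => V n \ ⋃ k ∈ Iic n, closure (U k)
  have hU'o : ∀ n, IsOpen (U' n) := fun n =>
    (hUo n).sdiff ((finite_Iic n).isClosed_biUnion fun k _ => isClosed_closure)
  have hV'o : ∀ n, IsOpen (V' n) := fun n =>
    (hVo n).sdiff ((finite_Iic n).isClosed_biUnion fun k _ => isClosed_closure)
  refine ⟨⋃ n, U' n, ⋃ n, V' n, isOpen_iUnion hU'o, isOpen_iUnion hV'o, ?_, ?_, ?_⟩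
  · intro x hx
    obtain ⟨n, hn⟩ := hEU x hx
    exact mem_iUnion.2 ⟨n, hn, by
      simp only [mem_iUnion]
      rintro ⟨k, -, hk⟩
      exact hVcl k hk hx⟩
  · intro x hx
    obtain ⟨n, hn⟩ := hFV x hx
    exact mem_iUnion.2 ⟨n, hn, by
      simp only [mem_iUnion]
      rintro ⟨k, -, hk⟩
      exact hUcl k hk hx⟩
  · rw [disjoint_left]
    rintro x hxU hxV
    obtain ⟨n, hnU, hnU'⟩ := mem_iUnion.mp hxU
    obtain ⟨m, hmV, hmV'⟩ := mem_iUnion.mp hxV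
    rcases le_total n m with hnm | hmn
    · exact hmV' (mem_iUnion₂.2 ⟨n, hnm, subset_closure hnU⟩)
    · exact hnU' (mem_iUnion₂.2 ⟨m, hmn, subset_closure hmV⟩)

end Helpers

theorem bing_nagata_smirnov {X : Type*} [TopologicalSpace X]
    [T0Space X] [RegularSpace X]
    (h : ∃ B : ℕ → Set (Set X), (∀ n, IsDiscreteFamily (B n)) ∧
      TopologicalSpace.IsTopologicalBasis (⋃ n, B n)) :
    TopologicalSpace.MetrizableSpace X := by
  obtain ⟨B, hd, hb⟩ := h
  haveI : NormalSpace X := normal_of_sigma_discrete_basis hd hb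
  have hbo : ∀ n, ∀ s ∈ B n, IsOpen s := fun n s hs => hb.isOpen (mem_iUnion.2 ⟨n, hs⟩)
  -- closed cores
  set C : ℕ → Set X → Set X := fun m s => closure (⋃₀ {t ∈ B m | closure t ⊆ s}) with hC
  have hCclosed : ∀ m s, IsClosed (C m s) := fun m s => isClosed_closure
  have hCsub : ∀ m (s : Set X), C m s ⊆ s := fun m s =>
    ((hd m).closure_sUnion_subset (fun t ht => ht.1)).trans
      (iUnion₂_subset fun t ht => ht.2)
  -- Urysohn functions
  have hfex : ∀ (m : ℕ) (s : Set X), ∃ f : C(X, ℝ),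
      (IsOpen s → (EqOn f 0 sᶜ ∧ EqOn f 1 (C m s))) ∧ ∀ x, f x ∈ Icc (0:ℝ) 1 := by
    intro m s
    by_cases hs : IsOpen s
    · obtain ⟨f, h0, h1, h01⟩ := exists_continuous_zero_one_of_isClosed
        hs.isClosed_compl (hCclosed m s)
        (disjoint_compl_left.mono_right (hCsub m s))
      exact ⟨f, fun _ => ⟨h0, h1⟩, h01⟩
    · exact ⟨0, fun h => absurd h hs, fun x => by simp⟩
  choose f hf hf01 using hfex
  -- the embedding
  set Φ : X → ∀ p : ℕ × ℕ, (↥(B p.1) →ᵤ ℝ) :=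
    fun x p => UniformFun.ofFun (fun b => f p.2 ↑b x) with hΦ
  haveI hcg : ∀ p : ℕ × ℕ, IsCountablyGenerated (𝓤 (↥(B p.1) →ᵤ ℝ)) := by
    intro p
    obtain ⟨V, hV⟩ := exists_antitone_basis (𝓤 ℝ)
    exact (UniformFun.hasBasis_uniformity_of_basis _ _ hV.toHasBasis).isCountablyGenerated
  haveI : ∀ p : ℕ × ℕ, PseudoMetrizableSpace (↥(B p.1) →ᵤ ℝ) := fun p =>
    UniformSpace.pseudoMetrizableSpace
  -- continuity of Φ
  have hΦc : Continuous Φ := by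
    refine continuous_pi fun p => ?_
    rw [continuous_iff_continuousAt]
    intro x₀
    rw [ContinuousAt, (UniformFun.hasBasis_nhds _ _ _).tendsto_right_iff]
    intro W hW
    obtain ⟨N, hN, hsub⟩ := hd p.1 x₀
    have zero_case : ∀ (b : ↥(B p.1)), ¬ ((↑b : Set X) ∩ N).Nonempty → ∀ x ∈ N,
        (f p.2 ↑b x₀, f p.2 ↑b x) ∈ W := by
      intro b hbN x hxN
      have h1 : f p.2 ↑b x₀ = 0 := (hf p.2 ↑b (hbo _ _ b.2)).1
        (fun hx₀b => hbN ⟨x₀, hx₀b, mem_of_mem_nhds hN⟩)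
      have h2 : f p.2 ↑b x = 0 := (hf p.2 ↑b (hbo _ _ b.2)).1
        (fun hxb => hbN ⟨x, hxb, hxN⟩)
      rw [h1, h2]
      exact refl_mem_uniformity hW
    by_cases hex : ∃ s₀ ∈ B p.1, (s₀ ∩ N).Nonempty
    · obtain ⟨s₀, hs₀, hs₀N⟩ := hex
      have hcont : {x | (f p.2 s₀ x₀, f p.2 s₀ x) ∈ W} ∈ 𝓝 x₀ :=
        (f p.2 s₀).continuous.continuousAt (UniformSpace.ball_mem_nhds _ hW)
      filter_upwards [hN, hcont] with x hxN hxW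
      intro b
      by_cases hbe : (↑b : Set X) = s₀
      · simp only [hΦ, UniformFun.toFun_ofFun, hbe]
        exact hxW
      · have hbN : ¬ ((↑b : Set X) ∩ N).Nonempty := fun hne =>
          hbe (hsub ⟨b.2, hne⟩ ⟨hs₀, hs₀N⟩)
        exact zero_case b hbN x hxN
    · filter_upwards [hN] with x hxN b
      exact zero_case b (fun hne => hex ⟨↑b, b.2, hne⟩) x hxN
  -- Φ is inducing
  have hΦi : Topology.IsInducing Φ := by
    rw [isInducing_iff_nhds]
    intro x
    refine le_antisymm ((hΦc.tendsto x).le_comap) ?_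
    intro U hU
    rw [mem_comap]
    obtain ⟨U', hU'U, hU'o, hxU'⟩ := mem_nhds_iff.mp hU
    obtain ⟨s, hsb, hxs, hsU'⟩ := hb.exists_subset_of_mem_open hxU' hU'o
    obtain ⟨n, hsn⟩ := mem_iUnion.mp hsb
    obtain ⟨m, t, htm, hxt, htcl⟩ := exists_basic_closure_subset hb (hbo n s hsn) hxs
    have hxC : x ∈ C m s := subset_closure ⟨t, ⟨htm, htcl⟩, hxt⟩
    have hfx : f m s x = 1 := (hf m s (hbo n s hsn)).2 hxC
    have hW : {q : ℝ × ℝ | dist q.1 q.2 < 1} ∈ 𝓤 ℝ := Metric.dist_mem_uniformity one_pos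
    refine ⟨(fun g => g (n, m)) ⁻¹'
      {g | (Φ x (n, m), g) ∈ UniformFun.gen (↥(B n)) ℝ {q : ℝ × ℝ | dist q.1 q.2 < 1}}, ?_, ?_⟩
    · exact (continuous_apply (n, m)).continuousAt.preimage_mem_nhds
        ((UniformFun.hasBasis_nhds _ _ _).mem_of_mem hW)
    · intro y hy
      have hsy : y ∈ s := by
        by_contra hys
        have h0 : f m s y = 0 := (hf m s (hbo n s hsn)).1 hys
        have := hy ⟨s, hsn⟩
        simp only [hΦ, UniformFun.toFun_ofFun] at this
        rw [hfx, h0] at this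
        norm_num at this
      exact hU'U (hsU' hsy)
  haveI : PseudoMetrizableSpace X := hΦi.pseudoMetrizableSpace
  letI := pseudoMetrizableSpacePseudoMetric X
  exact PseudoMetrizableSpace.toMetrizableSpace
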